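/- Suppose in addition that Z_{abcd}(x) = 0 for all x ∈ ℝⁿ₊ and all indices a,b,c,d, and that ∂ₙH_{ij}(x) = 0 for all x ∈ ∂ℝⁿ₊ and all i,j ∈ {1,…,n−1}. Then H_{ab}(x) = 0 for all x ∈ ℝⁿ₊ and all a,b (equivalently, every coefficient h_{ab,α} vanishes). (Lemma 1 of Almaraz–Sun.) -/

import Mathlib

open MeasureTheory

noncomputable section

/-- Euclidean space `ℝⁿ`. -/
abbrev Euc (n : ℕ) : Type := EuclideanSpace ℝ (Fin n)

/-- The partial derivative `∂ₐ f` of a function `f : ℝⁿ → ℝ`. -/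
noncomputable def pd {n : ℕ} (a : Fin n) (f : Euc n → ℝ) (x : Euc n) : ℝ :=
  fderiv ℝ f x (EuclideanSpace.single a 1)

/-- The degree `|α|` of a multi-index `α` (with entries bounded by `d`). -/
def mdeg {n d : ℕ} (α : Fin n → Fin (d + 1)) : ℕ := ∑ i, (α i : ℕ)

/-- The set of multi-indices `α` with `1 ≤ |α| ≤ d`. -/
def idxSet (n d : ℕ) : Finset (Fin n → Fin (d + 1)) :=
  Finset.univ.filter fun α => 1 ≤ mdeg α ∧ mdeg α ≤ d

/-- The polynomial tensor `H_{ab}(x) = Σ_{1 ≤ |α| ≤ d} h_{ab,α} x^α`. -/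
noncomputable def Hpoly {n d : ℕ} (h : Fin n → Fin n → (Fin n → Fin (d + 1)) → ℝ)
    (a b : Fin n) (x : Euc n) : ℝ :=
  ∑ α ∈ idxSet n d, h a b α * ∏ i, x i ^ (α i : ℕ)

/-- The algebraic Schouten tensor
`A_{ac} = ∂_c∂_e H_{ae} + ∂_a∂_e H_{ce} − ∂_e∂_e H_{ac} − (n−1)⁻¹ ∂_e∂_f H_{ef} δ_{ac}`
(repeated indices summed). -/
noncomputable def Atensor {n d : ℕ} (h : Fin n → Fin n → (Fin n → Fin (d + 1)) → ℝ)
    (a c : Fin n) (x : Euc n) : ℝ :=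
  (∑ e, pd c (pd e (Hpoly h a e)) x) + (∑ e, pd a (pd e (Hpoly h c e)) x)
    - (∑ e, pd e (pd e (Hpoly h a c)) x)
    - ((n : ℝ) - 1)⁻¹ * (∑ e, ∑ f, pd e (pd f (Hpoly h e f)) x)
        * (if a = c then (1 : ℝ) else 0)

/-- The algebraic Weyl tensor
`Z_{abcm} = ∂_b∂_m H_{ac} − ∂_b∂_c H_{am} + ∂_a∂_c H_{mb} − ∂_a∂_m H_{bc}
  + (n−2)⁻¹ (A_{ac}δ_{bm} − A_{am}δ_{bc} + A_{bm}δ_{ac} − A_{bc}δ_{mb})`. -/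
noncomputable def Ztensor {n d : ℕ} (h : Fin n → Fin n → (Fin n → Fin (d + 1)) → ℝ)
    (a b c m : Fin n) (x : Euc n) : ℝ :=
  pd b (pd m (Hpoly h a c)) x - pd b (pd c (Hpoly h a m)) x
    + pd a (pd c (Hpoly h m b)) x - pd a (pd m (Hpoly h b c)) x
    + ((n : ℝ) - 2)⁻¹ *
      (Atensor h a c x * (if b = m then (1 : ℝ) else 0)
        - Atensor h a m x * (if b = c then (1 : ℝ) else 0)
        + Atensor h b m x * (if a = c then (1 : ℝ) else 0)
        - Atensor h b c x * (if m = b then (1 : ℝ) else 0))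

/-! ### Auxiliary material: multivariate polynomial lemmas -/

namespace AlmarazSunAux

open MvPolynomial

variable {n : ℕ}

lemma pderiv_comm' (a b : Fin n) (p : MvPolynomial (Fin n) ℝ) :
    pderiv a (pderiv b p) = pderiv b (pderiv a p) := by
  induction p using MvPolynomial.induction_on with
  | C r => simp
  | add p q hp hq => simp [hp, hq]
  | mul_X p i hp =>
    rcases eq_or_ne i a with rfl | ha <;> rcases eq_or_ne i b with rfl | hb <;>
      simp [pderiv_mul, pderiv_X_self, pderiv_X_of_ne, Ne.symm, hp, *] <;> ring

lemma pderiv_X' (b a : Fin n) :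
    pderiv b (X a : MvPolynomial (Fin n) ℝ) = if a = b then 1 else 0 := by
  split_ifs with h
  · subst h; exact pderiv_X_self a
  · exact pderiv_X_of_ne h

lemma euler_monomial (s : Fin n →₀ ℕ) (c : ℝ) :
    (∑ a, X a * pderiv a (monomial s c)) = (∑ a, s a : ℕ) • monomial s c := by
  have key : ∀ a : Fin n, X a * pderiv a (monomial s c) = (s a) • monomial s c := by
    intro a
    rw [pderiv_monomial]
    rcases Nat.eq_zero_or_pos (s a) with h | h
    · simp [h]
    · rw [X, monomial_mul]
      have he : (Finsupp.single a 1) + (s - Finsupp.single a 1) = s :=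
        add_tsub_cancel_of_le (by rwa [Finsupp.single_le_iff])
      rw [he, smul_monomial]
      congr 1
      push_cast
      ring
  rw [Finset.sum_congr rfl fun a _ => key a, ← Finset.sum_smul]

/-- If `E g + g = 0` where `E` is the Euler operator, then `g = 0`. -/
lemma euler_eigen_zero (g : MvPolynomial (Fin n) ℝ)
    (hg : (∑ a, X a * pderiv a g) + g = 0) : g = 0 := by
  have hE : (∑ a : Fin n, X a * pderiv a g)
      = ∑ s ∈ g.support, (∑ a, s a : ℕ) • monomial s (coeff s g) := by
    conv_lhs => rw [← support_sum_monomial_coeff g]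
    calc (∑ a : Fin n, X a * pderiv a (∑ v ∈ g.support, monomial v (coeff v g)))
        = ∑ a : Fin n, ∑ v ∈ g.support, X a * pderiv a (monomial v (coeff v g)) := by
          simp only [map_sum, Finset.mul_sum]
      _ = ∑ v ∈ g.support, ∑ a : Fin n, X a * pderiv a (monomial v (coeff v g)) :=
          Finset.sum_comm
      _ = _ := Finset.sum_congr rfl fun s _ => euler_monomial s (coeff s g)
  ext s0
  by_contra hc
  have hs0 : s0 ∈ g.support := by simpa [mem_support_iff] using hc
  have h2 := congrArg (coeff s0) hg
  rw [coeff_add, hE, coeff_sum] at h2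
  simp only [coeff_smul, coeff_monomial, coeff_zero] at h2
  rw [Finset.sum_eq_single s0 (fun b _ hb => by simp [hb])
    (fun hb => absurd hs0 hb)] at h2
  simp only [eq_self_iff_true, if_true, if_pos, nsmul_eq_mul] at h2
  have hpos : (0:ℝ) < (∑ a, s0 a : ℕ) + 1 := by positivity
  have h3 : coeff s0 g = 0 := by
    by_contra hne
    rcases lt_or_gt_of_ne hne with hlt | hgt <;> nlinarith
  rw [mem_support_iff] at hs0; exact hs0 h3

/-- Substitute `Polynomial.X` for variable `ell` and constants elsewhere. -/
noncomputable def lineQ (ell : Fin n) (x : Fin n → ℝ) :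
    MvPolynomial (Fin n) ℝ →+* Polynomial ℝ :=
  (MvPolynomial.aeval fun i => if i = ell then Polynomial.X else Polynomial.C (x i)).toRingHom

lemma lineQ_eval (ell : Fin n) (x : Fin n → ℝ) (t : ℝ) (p : MvPolynomial (Fin n) ℝ) :
    (lineQ ell x p).eval t = eval (Function.update x ell t) p := by
  have : (Polynomial.evalRingHom t).comp (lineQ ell x)
      = MvPolynomial.eval (Function.update x ell t) := by
    apply MvPolynomial.ringHom_ext
    · intro r; simp [lineQ]
    · intro i
      simp only [RingHom.comp_apply, lineQ, AlgHom.toRingHom_eq_coe, RingHom.coe_coe, aeval_X,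
        eval_X, Polynomial.coe_evalRingHom]
      rcases eq_or_ne i ell with rfl | hi
      · simp
      · simp [hi, Function.update_of_ne hi]
  exact RingHom.congr_fun this p

lemma lineQ_derivative (ell : Fin n) (x : Fin n → ℝ) (p : MvPolynomial (Fin n) ℝ) :
    Polynomial.derivative (lineQ ell x p) = lineQ ell x (pderiv ell p) := by
  induction p using MvPolynomial.induction_on with
  | C r => simp [lineQ]
  | add p q hp hq => simp [map_add, hp, hq]
  | mul_X p i hp =>
    have hXi : lineQ ell x (X i) = if i = ell then Polynomial.X else Polynomial.C (x i) := by
      simp [lineQ]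
    have e1 : lineQ ell x (p * X i) = lineQ ell x p * lineQ ell x (X i) := map_mul _ _ _
    rw [e1, hXi, pderiv_mul]
    have e2 : lineQ ell x (pderiv ell p * X i + p * pderiv ell (X i))
        = lineQ ell x (pderiv ell p) * lineQ ell x (X i)
          + lineQ ell x p * lineQ ell x (pderiv ell (X i)) := by
      rw [map_add, map_mul, map_mul]
    rw [e2, hXi]
    rcases eq_or_ne i ell with rfl | hi
    · rw [if_pos rfl, pderiv_X_self, map_one, mul_one, Polynomial.derivative_mul, hp,
        Polynomial.derivative_X, mul_one]
    · rw [if_neg hi, pderiv_X_of_ne hi, map_zero, mul_zero, add_zero,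
        Polynomial.derivative_mul, hp, Polynomial.derivative_C, mul_zero, add_zero]

/-- A polynomial vanishing on a half-space is zero. -/
lemma zero_of_halfspace (ell : Fin n) (p : MvPolynomial (Fin n) ℝ)
    (h : ∀ x : Fin n → ℝ, 0 ≤ x ell → eval x p = 0) : p = 0 := by
  apply MvPolynomial.funext (q := 0)
  intro x
  have hq : lineQ ell x p = 0 := by
    apply Polynomial.eq_zero_of_infinite_isRoot
    apply Set.Infinite.mono (s := Set.Ici (0:ℝ)) _ (Set.Ici_infinite 0)
    intro t ht
    simp only [Set.mem_setOf_eq, Polynomial.IsRoot, lineQ_eval]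
    exact h _ (by simp [Function.update_self]; exact ht)
  have := lineQ_eval ell x (x ell) p
  rw [hq] at this
  simp only [Polynomial.eval_zero, Function.update_eq_self] at this
  simp [← this]

/-- A polynomial with zero `ell`-derivative vanishing on the hyperplane is zero. -/
lemma zero_of_hyperplane (ell : Fin n) (p : MvPolynomial (Fin n) ℝ)
    (hd : pderiv ell p = 0)
    (h : ∀ x : Fin n → ℝ, x ell = 0 → eval x p = 0) : p = 0 := by
  apply MvPolynomial.funext (q := 0)
  intro x
  have hq : Polynomial.derivative (lineQ ell x p) = 0 := by
    rw [lineQ_derivative, hd, map_zero]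
  have hc := Polynomial.eq_C_of_derivative_eq_zero hq
  have h0 : (lineQ ell x p).eval 0 = 0 := by
    rw [lineQ_eval]
    exact h _ (by simp [Function.update_self])
  rw [hc] at h0; simp at h0
  have := lineQ_eval ell x (x ell) p
  rw [hc, h0] at this
  simp only [Polynomial.eval_C, Function.update_eq_self] at this
  simp [← this]

lemma hasFDerivAt_mveval (p : MvPolynomial (Fin n) ℝ) (x : Euc n) :
    HasFDerivAt (fun y : Euc n => eval (fun i => y i) p)
      (∑ i, eval (fun i => x i) (pderiv i p) • (EuclideanSpace.proj i : Euc n →L[ℝ] ℝ)) x := by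
  induction p using MvPolynomial.induction_on with
  | C r =>
    simp only [eval_C, pderiv_C, map_zero, zero_smul, Finset.sum_const_zero]
    exact hasFDerivAt_const r x
  | add p q hp hq =>
    have := hp.add hq
    simp only [map_add] at this ⊢
    refine this.congr_fderiv ?_
    rw [← Finset.sum_add_distrib]
    congr 1; ext i; rw [add_smul]
  | mul_X p j hp =>
    have hXj : HasFDerivAt (fun y : Euc n => y j)
        (EuclideanSpace.proj j : Euc n →L[ℝ] ℝ) x := by
      simpa using (EuclideanSpace.proj j : Euc n →L[ℝ] ℝ).hasFDerivAt (x := x)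
    have hmul := hp.mul hXj
    simp only [map_mul, eval_X]
    refine hmul.congr_fderiv ?_
    ext v
    simp only [ContinuousLinearMap.sum_apply, ContinuousLinearMap.smul_apply,
      ContinuousLinearMap.add_apply, PiLp.proj_apply, smul_eq_mul]
    have key : ∀ i : Fin n, eval (fun k => x k) (pderiv i (p * X j))
        = x j * eval (fun k => x k) (pderiv i p)
          + (if i = j then eval (fun k => x k) p else 0) := by
      intro i
      rw [pderiv_mul]
      rcases eq_or_ne j i with rfl | hji
      · simp [pderiv_X_self]; ring
      · simp [pderiv_X_of_ne hji, (Ne.symm hji : i ≠ j)]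
        ring
    simp only [key, add_mul, Finset.sum_add_distrib, ite_mul, zero_mul, mul_assoc,
      ← Finset.mul_sum, Finset.sum_ite_eq', Finset.mem_univ, if_true]
    ring

lemma pd_mveval (a : Fin n) (p : MvPolynomial (Fin n) ℝ) :
    pd a (fun y : Euc n => eval (fun i => y i) p)
      = fun x : Euc n => eval (fun i => x i) (pderiv a p) := by
  funext x
  rw [pd, (hasFDerivAt_mveval p x).fderiv]
  simp only [ContinuousLinearMap.sum_apply, ContinuousLinearMap.smul_apply,
    PiLp.proj_apply, smul_eq_mul, EuclideanSpace.single_apply]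
  rw [Finset.sum_congr rfl (fun i _ => by rw [mul_ite, mul_one, mul_zero]),
    Finset.sum_ite_eq' Finset.univ a _]
  simp

end AlmarazSunAux

namespace AlmarazSunAux
open MvPolynomial

variable {n : ℕ}

noncomputable def Apol (P : Fin n → Fin n → MvPolynomial (Fin n) ℝ) (a c : Fin n) :
    MvPolynomial (Fin n) ℝ :=
  (∑ e, pderiv c (pderiv e (P a e))) + (∑ e, pderiv a (pderiv e (P c e)))
    - (∑ e, pderiv e (pderiv e (P a c)))
    - C ((n : ℝ) - 1)⁻¹ * (∑ e, ∑ f, pderiv e (pderiv f (P e f)))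
        * (if a = c then (1 : MvPolynomial (Fin n) ℝ) else 0)

noncomputable def Zpol (P : Fin n → Fin n → MvPolynomial (Fin n) ℝ) (a b c m : Fin n) :
    MvPolynomial (Fin n) ℝ :=
  pderiv b (pderiv m (P a c)) - pderiv b (pderiv c (P a m))
    + pderiv a (pderiv c (P m b)) - pderiv a (pderiv m (P b c))
    + C ((n : ℝ) - 2)⁻¹ *
      (Apol P a c * (if b = m then 1 else 0)
        - Apol P a m * (if b = c then 1 else 0)
        + Apol P b m * (if a = c then 1 else 0)
        - Apol P b c * (if m = b then 1 else 0))

/-- cancel a nonzero constant -/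
lemma cancel_C {c : ℝ} (hc : c ≠ 0) {p : MvPolynomial (Fin n) ℝ}
    (h : C c * p = 0) : p = 0 := by
  rcases mul_eq_zero.1 h with h1 | h1
  · exact absurd (by simpa [MvPolynomial.C_eq_zero] using h1) hc
  · exact h1

theorem polyMain (hn : 4 ≤ n) (ell : Fin n)
    (P : Fin n → Fin n → MvPolynomial (Fin n) ℝ)
    (hsym : ∀ a b, P a b = P b a)
    (htr : (∑ a, P a a) = 0)
    (hPell : ∀ a, P a ell = 0)
    (htang : ∀ i, i ≠ ell → ∀ x : Fin n → ℝ, x ell = 0 →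
      (∑ j ∈ Finset.univ.erase ell, x j * eval x (P i j)) = 0)
    (hZ : ∀ a b c m, Zpol P a b c m = 0)
    (hbd : ∀ i j, i ≠ ell → j ≠ ell → ∀ x : Fin n → ℝ, x ell = 0 →
      eval x (pderiv ell (P i j)) = 0) :
    ∀ a b, P a b = 0 := by
  have hn4 : (4:ℝ) ≤ (n:ℝ) := by exact_mod_cast hn
  have hn2 : ((n : ℝ) - 2) ≠ 0 := by linarith
  have hn1 : ((n : ℝ) - 1) ≠ 0 := by linarith
  have hPell2 : ∀ a, P ell a = 0 := fun a => (hsym ell a).trans (hPell a)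
  -- A_{ell ell}
  have hAll : Apol P ell ell
      = - (C ((n : ℝ) - 1)⁻¹ * (∑ e, ∑ f, pderiv e (pderiv f (P e f)))) := by
    simp [Apol, hPell, hPell2]
  -- second normal derivatives in terms of Q
  have hd2 : ∀ i j, i ≠ ell → j ≠ ell →
      pderiv ell (pderiv ell (P i j))
        = C ((n : ℝ) - 2)⁻¹ * (C ((n : ℝ) - 1)⁻¹ * (∑ e, ∑ f, pderiv e (pderiv f (P e f))))
            * (if i = j then 1 else 0) := by
    intro i j hi hj
    have z := hZ ell i j ell
    rw [Zpol] at z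
    rw [hAll] at z
    simp only [hPell, hPell2, map_zero, if_neg hi, if_neg (Ne.symm hj), if_neg (Ne.symm hi),
      mul_zero, zero_mul, zero_sub, zero_add, sub_zero, add_zero, mul_one] at z
    linear_combination -z
  -- Q vanishes
  have hQ : (∑ e : Fin n, ∑ f, pderiv e (pderiv f (P e f))) = 0 := by
    have hsum0 : (∑ i ∈ Finset.univ.erase ell, P i i) = 0 := by
      have h1 : (∑ i ∈ Finset.univ.erase ell, P i i) + P ell ell = ∑ a, P a a :=
        Finset.sum_erase_add Finset.univ (fun i => P i i) (Finset.mem_univ ell)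
      rw [htr, hPell ell, add_zero] at h1
      exact h1
    have hL : ∑ i ∈ Finset.univ.erase ell, pderiv ell (pderiv ell (P i i)) = 0 := by
      rw [← map_sum, ← map_sum, hsum0, map_zero, map_zero]
    have hRs : ∑ i ∈ Finset.univ.erase ell, pderiv ell (pderiv ell (P i i))
        = ∑ _i ∈ Finset.univ.erase ell,
            C ((n : ℝ) - 2)⁻¹ * (C ((n : ℝ) - 1)⁻¹
              * (∑ e, ∑ f, pderiv e (pderiv f (P e f)))) := by
      refine Finset.sum_congr rfl fun i hi => ?_
      rw [hd2 i i (Finset.ne_of_mem_erase hi) (Finset.ne_of_mem_erase hi), if_pos rfl, mul_one]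
    rw [hRs, Finset.sum_const] at hL
    have hcard : (Finset.univ.erase ell).card = n - 1 := by
      rw [Finset.card_erase_of_mem (Finset.mem_univ ell), Finset.card_univ, Fintype.card_fin]
    rw [hcard, nsmul_eq_mul, ← C_eq_coe_nat, ← mul_assoc, ← C_mul, ← mul_assoc, ← C_mul] at hL
    refine cancel_C (c := ((n - 1 : ℕ) : ℝ) * ((n : ℝ) - 2)⁻¹ * ((n : ℝ) - 1)⁻¹) ?_ hL
    refine mul_ne_zero (mul_ne_zero ?_ (inv_ne_zero hn2)) (inv_ne_zero hn1)
    exact Nat.cast_ne_zero.mpr (by omega)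
  have hd2' : ∀ a b, pderiv ell (pderiv ell (P a b)) = 0 := by
    intro a b
    rcases eq_or_ne a ell with rfl | ha
    · simp [hPell2]
    rcases eq_or_ne b ell with rfl | hb
    · simp [hPell]
    rw [hd2 a b ha hb, hQ]
    simp
  -- first normal derivatives vanish
  have hDell : ∀ a b, pderiv ell (P a b) = 0 := by
    intro a b
    rcases eq_or_ne a ell with rfl | ha
    · simp [hPell2]
    rcases eq_or_ne b ell with rfl | hb
    · simp [hPell]
    exact zero_of_hyperplane ell _ (hd2' a b) (hbd a b ha hb)
  -- the radial identity Σ_a X_a P_{ia} = 0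
  have hXid : ∀ i, (∑ a, X a * P i a) = 0 := by
    intro i
    rcases eq_or_ne i ell with rfl | hi
    · simp [hPell2]
    apply zero_of_hyperplane ell
    · rw [map_sum]
      have hterm : ∀ a : Fin n, pderiv ell (X a * P i a)
          = (if a = ell then 1 else 0) * P i a := by
        intro a
        rw [pderiv_mul, pderiv_X', hDell, mul_zero, add_zero]
      simp only [hterm, ite_mul, one_mul, zero_mul]
      rw [Finset.sum_ite_eq' Finset.univ ell]
      simp [hPell]
    · intro x hx
      rw [map_sum]
      simp only [map_mul, eval_X]
      rw [← Finset.sum_erase_add _ _ (Finset.mem_univ ell), htang i hi x hx, hx]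
      simp
  -- A with an ell index vanishes
  have hcom0 : ∀ a e, pderiv ell (pderiv e (P a e)) = 0 := by
    intro a e
    rw [pderiv_comm', hDell, map_zero]
  have hAell1 : ∀ a, Apol P ell a = 0 := by
    intro a
    simp [Apol, hPell2, hcom0, hQ]
  have hAell2 : ∀ a, Apol P a ell = 0 := by
    intro a
    simp [Apol, hPell, hPell2, hcom0, hQ]
  -- A vanishes identically
  have hA : ∀ a c, Apol P a c = 0 := by
    intro a c
    rcases eq_or_ne a ell with rfl | ha
    · exact hAell1 c
    rcases eq_or_ne c ell with rfl | hc
    · exact hAell2 a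
    have z := hZ a ell c ell
    rw [Zpol] at z
    rw [hAell1, hAell1, hAell2, hd2' a c] at z
    simp only [hPell, hPell2, map_zero, eq_self_iff_true, if_true, mul_one,
      if_neg (Ne.symm hc), mul_zero, zero_mul, zero_sub, zero_add, sub_zero, add_zero,
      neg_zero] at z
    exact cancel_C (inv_ne_zero hn2) (by linear_combination z)
  -- the algebraic Riemann tensor vanishes
  have hR : ∀ a b c m, pderiv b (pderiv m (P a c)) - pderiv b (pderiv c (P a m))
      + pderiv a (pderiv c (P m b)) - pderiv a (pderiv m (P b c)) = 0 := by
    intro a b c m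
    have z := hZ a b c m
    rw [Zpol] at z
    rw [hA, hA, hA, hA] at z
    simpa using z
  -- first derivative identities from the radial identity
  have hX1 : ∀ i b, P i b + ∑ a, X a * pderiv b (P i a) = 0 := by
    intro i b
    have h1 := congrArg (pderiv b) (hXid i)
    rw [map_sum, map_zero] at h1
    have hterm : ∀ a : Fin n, pderiv b (X a * P i a)
        = (if a = b then 1 else 0) * P i a + X a * pderiv b (P i a) := by
      intro a
      rw [pderiv_mul, pderiv_X']
    simp only [hterm, ite_mul, one_mul, zero_mul, Finset.sum_add_distrib] at h1
    rw [Finset.sum_ite_eq' Finset.univ b] at h1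
    simpa using h1
  have hX2 : ∀ i b c, pderiv c (P i b) + pderiv b (P i c)
      + ∑ a, X a * pderiv c (pderiv b (P i a)) = 0 := by
    intro i b c
    have h1 := congrArg (pderiv c) (hX1 i b)
    rw [map_add, map_sum, map_zero] at h1
    have hterm : ∀ a : Fin n, pderiv c (X a * pderiv b (P i a))
        = (if a = c then 1 else 0) * pderiv b (P i a)
          + X a * pderiv c (pderiv b (P i a)) := by
      intro a
      rw [pderiv_mul, pderiv_X']
    simp only [hterm, ite_mul, one_mul, zero_mul, Finset.sum_add_distrib] at h1
    rw [Finset.sum_ite_eq' Finset.univ c] at h1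
    simp only [Finset.mem_univ, if_true] at h1
    linear_combination h1
  -- total symmetry of first derivatives
  have hC : ∀ a b c, pderiv b (P a c) = pderiv a (P b c) := by
    intro a b c
    rw [← sub_eq_zero]
    apply euler_eigen_zero
    have T : ∑ m : Fin n, X m * (pderiv b (pderiv m (P a c)) - pderiv b (pderiv c (P a m))
        + pderiv a (pderiv c (P m b)) - pderiv a (pderiv m (P b c))) = 0 := by
      simp [hR]
    simp only [mul_sub, mul_add, Finset.sum_sub_distrib, Finset.sum_add_distrib] at T
    have c1 : ∑ m : Fin n, X m * pderiv b (pderiv m (P a c))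
        = ∑ m : Fin n, X m * pderiv m (pderiv b (P a c)) :=
      Finset.sum_congr rfl fun m _ => by rw [pderiv_comm']
    have c4 : ∑ m : Fin n, X m * pderiv a (pderiv m (P b c))
        = ∑ m : Fin n, X m * pderiv m (pderiv a (P b c)) :=
      Finset.sum_congr rfl fun m _ => by rw [pderiv_comm']
    have c3 : ∑ m : Fin n, X m * pderiv a (pderiv c (P m b))
        = ∑ m : Fin n, X m * pderiv a (pderiv c (P b m)) :=
      Finset.sum_congr rfl fun m _ => by rw [hsym m b]
    have e2 := hX2 a c b
    have e3 := hX2 b c a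
    have hs : pderiv c (P a b) = pderiv c (P b a) := by rw [hsym a b]
    have hsub : ∑ m : Fin n, X m * pderiv m (pderiv b (P a c) - pderiv a (P b c))
        = (∑ m : Fin n, X m * pderiv m (pderiv b (P a c)))
          - ∑ m : Fin n, X m * pderiv m (pderiv a (P b c)) := by
      simp only [map_sub, mul_sub, Finset.sum_sub_distrib]
    rw [hsub]
    linear_combination T - c1 + c4 - c3 + e2 - e3 - hs
  -- conclusion
  intro a c
  apply euler_eigen_zero
  have e1 : (∑ b : Fin n, X b * pderiv b (P a c)) = ∑ b : Fin n, X b * pderiv a (P c b) :=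
    Finset.sum_congr rfl fun b _ => by rw [hC a b c, hsym b c]
  rw [e1]
  linear_combination hX1 c a + hsym a c

end AlmarazSunAux

namespace AlmarazSunAux
open MvPolynomial

variable {n d : ℕ}

noncomputable def Pol (h : Fin n → Fin n → (Fin n → Fin (d + 1)) → ℝ) (a b : Fin n) :
    MvPolynomial (Fin n) ℝ :=
  ∑ α ∈ idxSet n d, C (h a b α) * ∏ i, X i ^ (α i : ℕ)

lemma Hpoly_eval (h : Fin n → Fin n → (Fin n → Fin (d + 1)) → ℝ) (a b : Fin n) :
    Hpoly h a b = fun x : Euc n => eval (fun i => x i) (Pol h a b) := by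
  funext x
  simp [Hpoly, Pol, map_sum, map_prod]

lemma Atensor_eval (h : Fin n → Fin n → (Fin n → Fin (d + 1)) → ℝ) (a c : Fin n) (x : Euc n) :
    Atensor h a c x = eval (fun i => x i) (Apol (Pol h) a c) := by
  simp only [Atensor, Hpoly_eval, pd_mveval, Apol, map_add, map_sub, map_sum, map_mul,
    eval_C, apply_ite (eval fun i => x i), map_one, map_zero]

lemma Ztensor_eval (h : Fin n → Fin n → (Fin n → Fin (d + 1)) → ℝ) (a b c m : Fin n)
    (x : Euc n) :
    Ztensor h a b c m x = eval (fun i => x i) (Zpol (Pol h) a b c m) := by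
  simp only [Ztensor, Hpoly_eval, pd_mveval, Zpol, map_add, map_sub, map_sum, map_mul,
    eval_C, apply_ite (eval fun i => x i), map_one, map_zero, Atensor_eval]

end AlmarazSunAux

open AlmarazSunAux MvPolynomial

/-- Lemma 1 of Almaraz–Sun: if the algebraic Weyl tensor of `H` vanishes on `ℝⁿ₊` and
`∂ₙ H_{ij} = 0` on `∂ℝⁿ₊`, then `H ≡ 0` on `ℝⁿ₊`.
Here `n ≥ 4`, `d = ⌊(n−2)/2⌋`, and `ell` is the last index (the `n`-th coordinate). -/
theorem stmt0 (n : ℕ) (hn : 4 ≤ n) (ell : Fin n) (hell : (ell : ℕ) = n - 1)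
    (h : Fin n → Fin n → (Fin n → Fin ((n - 2) / 2 + 1)) → ℝ)
    (hsym : ∀ (a b : Fin n) (x : Euc n), Hpoly h a b x = Hpoly h b a x)
    (htrace : ∀ x : Euc n, ∑ a, Hpoly h a a x = 0)
    (hHn : ∀ (a : Fin n) (x : Euc n), 0 ≤ x ell → Hpoly h a ell x = 0)
    (hpd0 : ∀ i j k : Fin n, i ≠ ell → j ≠ ell → k ≠ ell → pd k (Hpoly h i j) 0 = 0)
    (htang : ∀ (i : Fin n) (x : Euc n), i ≠ ell → x ell = 0 →
      ∑ j ∈ Finset.univ.erase ell, x j * Hpoly h i j x = 0)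
    (hZ : ∀ (a b c m : Fin n) (x : Euc n), 0 ≤ x ell → Ztensor h a b c m x = 0)
    (hbd : ∀ (i j : Fin n) (x : Euc n), i ≠ ell → j ≠ ell → x ell = 0 →
      pd ell (Hpoly h i j) x = 0) :
    ∀ (a b : Fin n) (x : Euc n), 0 ≤ x ell → Hpoly h a b x = 0 := by
  have main : ∀ a b, Pol h a b = 0 := by
    apply polyMain hn ell (Pol h)
    · -- symmetry
      intro a b
      apply MvPolynomial.funext
      intro y
      have := hsym a b (WithLp.toLp 2 y : Euc n)
      rw [Hpoly_eval, Hpoly_eval] at this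
      exact this
    · -- trace
      apply MvPolynomial.funext
      intro y
      have := htrace (WithLp.toLp 2 y : Euc n)
      simp only [Hpoly_eval] at this
      rw [map_sum]
      simpa using this
    · -- P a ell = 0
      intro a
      apply zero_of_halfspace ell
      intro y hy
      have := hHn a (WithLp.toLp 2 y : Euc n) hy
      rwa [Hpoly_eval] at this
    · -- tangential identity
      intro i hi y hy
      have := htang i (WithLp.toLp 2 y : Euc n) hi hy
      simp only [Hpoly_eval] at this
      exact this
    · -- Weyl
      intro a b c m
      apply zero_of_halfspace ell
      intro y hy
      have := hZ a b c m (WithLp.toLp 2 y : Euc n) hy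
      rwa [Ztensor_eval] at this
    · -- boundary derivative
      intro i j hi hj y hy
      have := hbd i j (WithLp.toLp 2 y : Euc n) hi hj hy
      rwa [Hpoly_eval, pd_mveval] at this
  intro a b x _
  rw [Hpoly_eval, main a b]
  simp
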